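/- Let n and k be integers with 1 ≤ k ≤ n − 3, and let J_{n,k} ⊆ K[x_1,…,x_n] be the ideal generated by all squarefree monomials x_{i_1} ··· x_{i_{k+2}} with 1 ≤ i_1 < … < i_{k+2} ≤ n having some t < k+2 with i_{t+1} − i_t ≥ 2, with G(J_{n,k}) ordered by the lexicographic order induced by x_1 > … > x_n. Let u = x_{i_1} ··· x_{i_{k+2}} ∈ G(J_{n,k}), let t be the smallest index with i_{t+1} − i_t ≥ 2 (so 1 ≤ t ≤ k+1), and set A = {1,2,…,i_{k+2}} ∖ {i_1,…,i_{k+2}}. Then set(u) = A if t < k+1, and set(u) = A ∖ {i_{k+1} + 1} if t = k+1, where set(u) = { l : x_l ∈ ( v ∈ G(J_{n,k}) : v >_lex u ) : u }. -/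

import Mathlib

open MvPolynomial

/-- `T = {i_1 < ⋯ < i_r}` has a gap: some consecutive pair of elements of `T` differs by ≥ 2. -/
def HasGap {n : ℕ} (T : Finset (Fin n)) : Prop :=
  ∃ a ∈ T, ∃ b ∈ T, (a : ℕ) + 2 ≤ (b : ℕ) ∧ ∀ x ∈ T, a < x → b ≤ x

/-- The exponent vector of the squarefree monomial `x_T = ∏_{i ∈ T} x_i`. -/
noncomputable def sqfree {n : ℕ} (T : Finset (Fin n)) : Fin n →₀ ℕ :=
  ∑ i ∈ T, Finsupp.single i 1

/-- `a >_lex b` for the lexicographic order on monomials induced by `x_1 > x_2 > ⋯ > x_n`. -/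
def lexGT {n : ℕ} (a b : Fin n →₀ ℕ) : Prop :=
  ∃ i : Fin n, (∀ j : Fin n, j < i → a j = b j) ∧ b i < a i

/-- `set(u)` for a generator `u` (with exponent vector `e`) of `J_{n,k}`, with respect to the
lexicographic order on the minimal generators of `J_{n,k}`: the set of indices `l` such that
`x_l` lies in the colon ideal of the lex-greater generators by `u`. -/
noncomputable def lqSet (K : Type*) [Field K] (n k : ℕ) (e : Fin n →₀ ℕ) : Set (Fin n) :=
  {l : Fin n | MvPolynomial.X l ∈
    Submodule.colon
      (Ideal.span {p : MvPolynomial (Fin n) K | ∃ U : Finset (Fin n),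
        U.card = k + 2 ∧ HasGap U ∧ lexGT (sqfree U) e ∧ p = monomial (sqfree U) 1})
      (Ideal.span {(monomial e (1 : K))})}

lemma sqfree_apply {n : ℕ} (T : Finset (Fin n)) (x : Fin n) :
    sqfree T x = if x ∈ T then 1 else 0 := by
  classical
  simp [sqfree, Finsupp.finset_sum_apply, Finsupp.single_apply, Finset.sum_ite_eq' T x (fun _ => 1)]

lemma mem_lqSet_iff {K : Type*} [Field K] {n k : ℕ} (T : Finset (Fin n)) (l : Fin n) :
    l ∈ lqSet K n k (sqfree T) ↔ ∃ U : Finset (Fin n),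
      U.card = k + 2 ∧ HasGap U ∧ lexGT (sqfree U) (sqfree T) ∧
        sqfree U ≤ Finsupp.single l 1 + sqfree T := by
  classical
  have hset : {p : MvPolynomial (Fin n) K | ∃ U : Finset (Fin n),
        U.card = k + 2 ∧ HasGap U ∧ lexGT (sqfree U) (sqfree T) ∧ p = monomial (sqfree U) 1}
      = (fun s => monomial s (1 : K)) '' {s | ∃ U : Finset (Fin n),
        U.card = k + 2 ∧ HasGap U ∧ lexGT (sqfree U) (sqfree T) ∧ s = sqfree U} := by
    ext p
    constructor
    · rintro ⟨U, h1, h2, h3, rfl⟩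
      exact ⟨sqfree U, ⟨U, h1, h2, h3, rfl⟩, rfl⟩
    · rintro ⟨s, ⟨U, h1, h2, h3, rfl⟩, rfl⟩
      exact ⟨U, h1, h2, h3, rfl⟩
  have hX : (MvPolynomial.X l : MvPolynomial (Fin n) K) • monomial (sqfree T) (1 : K)
      = monomial (Finsupp.single l 1 + sqfree T) 1 := by
    rw [smul_eq_mul, X, monomial_mul, one_mul]
  rw [lqSet, Set.mem_setOf_eq, hset, ← Ideal.submodule_span_eq, ← Ideal.submodule_span_eq, Submodule.mem_colon_span_singleton, hX, Ideal.submodule_span_eq,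
    mem_ideal_span_monomial_image]
  rw [support_monomial, if_neg one_ne_zero]
  constructor
  · intro h
    obtain ⟨si, ⟨U, h1, h2, h3, rfl⟩, hle⟩ := h _ (Finset.mem_singleton_self _)
    exact ⟨U, h1, h2, h3, hle⟩
  · rintro ⟨U, h1, h2, h3, hle⟩ xi hxi
    rw [Finset.mem_singleton] at hxi
    exact ⟨sqfree U, ⟨U, h1, h2, h3, rfl⟩, hxi ▸ hle⟩

lemma sqfree_le_iff {n : ℕ} (U T : Finset (Fin n)) (l : Fin n) :
    sqfree U ≤ Finsupp.single l 1 + sqfree T ↔ U ⊆ insert l T := by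
  classical
  rw [Finsupp.le_def]
  constructor
  · intro h x hx
    have hh := h x
    simp only [Finsupp.add_apply, Finsupp.single_apply, sqfree_apply] at hh
    rw [if_pos hx] at hh
    by_contra hn
    rw [Finset.mem_insert, not_or] at hn
    rw [if_neg (fun he : l = x => hn.1 he.symm), if_neg hn.2] at hh
    omega
  · intro h x
    simp only [Finsupp.add_apply, Finsupp.single_apply, sqfree_apply]
    by_cases h1 : x ∈ U
    · rcases Finset.mem_insert.mp (h h1) with h4 | h4
      · rw [if_pos h1, if_pos h4.symm]
        exact Nat.le_add_right 1 _
      · rw [if_pos h1, if_pos h4]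
        exact le_add_self
    · rw [if_neg h1]
      exact Nat.zero_le _

lemma lexGT_iff {n : ℕ} (T : Finset (Fin n)) (l j : Fin n) (hl : l ∉ T) (hj : j ∈ T) :
    lexGT (sqfree (insert l (T.erase j))) (sqfree T) ↔ l < j := by
  classical
  have hmem : ∀ x : Fin n, x ∈ insert l (T.erase j) ↔ (x = l ∨ (x ∈ T ∧ x ≠ j)) := by
    intro x; simp [Finset.mem_insert, Finset.mem_erase, and_comm]
  constructor
  · rintro ⟨p, hbelow, hp⟩
    rw [sqfree_apply, sqfree_apply] at hp
    have hpU : p ∈ insert l (T.erase j) := by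
      by_contra hc; rw [if_neg hc] at hp; omega
    rw [if_pos hpU] at hp
    have hpT : p ∉ T := by by_contra hc; rw [if_pos hc] at hp; omega
    have hpl : p = l := by
      rcases (hmem p).mp hpU with h | h
      · exact h
      · exact absurd h.1 hpT
    subst hpl
    have hjl : j ≠ p := fun he => hl (he ▸ hj)
    rcases lt_or_gt_of_ne hjl with h | h
    · exfalso
      have := hbelow j h
      rw [sqfree_apply, sqfree_apply, if_pos hj, if_neg] at this
      · omega
      · rw [hmem]; push_neg
        exact ⟨fun he => hjl he, fun _ => rfl⟩
    · exact h
  · intro hlj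
    refine ⟨l, ?_, ?_⟩
    · intro m hm
      rw [sqfree_apply, sqfree_apply]
      refine if_congr ?_ rfl rfl
      rw [hmem]
      constructor
      · rintro (h | h)
        · exact absurd h (ne_of_lt hm)
        · exact h.1
      · intro h
        exact Or.inr ⟨h, fun he => absurd (he ▸ hm) (not_lt.mpr (le_of_lt hlj))⟩
    · rw [sqfree_apply, sqfree_apply, if_neg hl, if_pos ((hmem l).mpr (Or.inl rfl))]
      omega

lemma card_le_spread {n : ℕ} (U : Finset (Fin n)) (hne : U.Nonempty) :
    U.card ≤ (U.max' hne : ℕ) - (U.min' hne : ℕ) + 1 := by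
  classical
  have hsub : U.image (Fin.val) ⊆ Finset.Icc ((U.min' hne : ℕ)) ((U.max' hne : ℕ)) := by
    intro m hm
    obtain ⟨x, hx, rfl⟩ := Finset.mem_image.mp hm
    exact Finset.mem_Icc.mpr ⟨Finset.min'_le U x hx, Finset.le_max' U x hx⟩
  calc U.card = (U.image Fin.val).card :=
        (Finset.card_image_of_injective U Fin.val_injective).symm
    _ ≤ (Finset.Icc ((U.min' hne : ℕ)) ((U.max' hne : ℕ))).card := Finset.card_le_card hsub
    _ = (U.max' hne : ℕ) - (U.min' hne : ℕ) + 1 := by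
        have hmm : (U.min' hne : ℕ) ≤ (U.max' hne : ℕ) :=
          Finset.min'_le U _ (U.max'_mem hne)
        rw [Nat.card_Icc]; omega

lemma hasGap_of_spread {n : ℕ} (U : Finset (Fin n)) (hne : U.Nonempty)
    (h : (U.min' hne : ℕ) + U.card ≤ (U.max' hne : ℕ)) : HasGap U := by
  classical
  have key : ∃ a ∈ U, (a : ℕ) < (U.max' hne : ℕ) ∧ ∀ b ∈ U, (b : ℕ) ≠ (a : ℕ) + 1 := by
    by_contra hc
    push_neg at hc
    -- every element below max has a successor in U
    have hstep : ∀ a ∈ U, (a : ℕ) < (U.max' hne : ℕ) → ∃ b ∈ U, (b : ℕ) = (a : ℕ) + 1 :=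
      fun a ha hlt => hc a ha hlt
    have hIcc : ∀ m : ℕ, (U.min' hne : ℕ) ≤ m → m ≤ (U.max' hne : ℕ) →
        ∃ x ∈ U, (x : ℕ) = m := by
      intro m hm
      induction m, hm using Nat.le_induction with
      | base => exact fun _ => ⟨U.min' hne, U.min'_mem hne, rfl⟩

      | succ m hm ih =>
        intro hle
        obtain ⟨x, hx, hxv⟩ := ih (by omega)
        obtain ⟨b, hb, hbv⟩ := hstep x hx (by omega)
        exact ⟨b, hb, by omega⟩
    have hsub : Finset.Icc ((U.min' hne : ℕ)) ((U.max' hne : ℕ)) ⊆ U.image Fin.val := by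
      intro m hm
      rw [Finset.mem_Icc] at hm
      obtain ⟨x, hx, hxv⟩ := hIcc m hm.1 hm.2
      exact Finset.mem_image.mpr ⟨x, hx, hxv⟩
    have hcard : (U.max' hne : ℕ) - (U.min' hne : ℕ) + 1 ≤ U.card := by
      calc (U.max' hne : ℕ) - (U.min' hne : ℕ) + 1
          = (Finset.Icc ((U.min' hne : ℕ)) ((U.max' hne : ℕ))).card := by
            rw [Nat.card_Icc]
            have hmm : (U.min' hne : ℕ) ≤ (U.max' hne : ℕ) :=
              Finset.min'_le U _ (U.max'_mem hne)
            omega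
        _ ≤ (U.image Fin.val).card := Finset.card_le_card hsub
        _ = U.card := Finset.card_image_of_injective U Fin.val_injective
    omega
  obtain ⟨a, haU, halt, hasucc⟩ := key
  have hFne : (U.filter (fun x => a < x)).Nonempty := by
    refine ⟨U.max' hne, Finset.mem_filter.mpr ⟨U.max'_mem hne, ?_⟩⟩
    exact Fin.lt_def.mpr halt
  set b := (U.filter (fun x => a < x)).min' hFne with hb
  have hbmem := Finset.min'_mem _ hFne
  rw [Finset.mem_filter] at hbmem
  refine ⟨a, haU, b, hbmem.1, ?_, ?_⟩
  · have h1 : (a : ℕ) < (b : ℕ) := hbmem.2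
    have h2 : (b : ℕ) ≠ (a : ℕ) + 1 := hasucc b hbmem.1
    omega
  · intro x hx hax
    exact Finset.min'_le _ x (Finset.mem_filter.mpr ⟨hx, hax⟩)

lemma strictMono_chain {m n : ℕ} {i : Fin m → Fin n} (hi : StrictMono i) :
    ∀ d : ℕ, ∀ a b : Fin m, (b : ℕ) = (a : ℕ) + d → (i a : ℕ) + d ≤ (i b : ℕ) := by
  intro d
  induction d with
  | zero =>
    intro a b hab
    have hab' : a = b := Fin.ext (by omega)
    rw [hab']
    omega
  | succ d ih =>
    intro a b hab
    have hbd : (a : ℕ) + d < m := by have := b.isLt; omega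
    set b' : Fin m := ⟨(a : ℕ) + d, hbd⟩ with hb'
    have h1 := ih a b' rfl
    have h2 : i b' < i b := hi (by rw [Fin.lt_def]; simp [hb']; omega)
    rw [Fin.lt_def] at h2
    omega

/-- let `1 ≤ k ≤ n - 3` and let `u = x_{i_1} ⋯ x_{i_{k+2}}` (here `i_1 < ⋯ < i_{k+2}`
is encoded by the strictly monotone map `i : Fin (k+2) → Fin n`) be a minimal generator of
`J_{n,k} = HS_k(I(P_n^c))`, let `t` be the smallest index with `i_{t+1} - i_t ≥ 2`, and let
`A = {1, …, i_{k+2}} ∖ {i_1, …, i_{k+2}}`. Then `set(u) = A` if `t < k+1`, and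
`set(u) = A ∖ {i_{k+1} + 1}` if `t = k+1`. (Here `t : Fin (k+1)` is the 0-based version of the
paper's `t ∈ {1, …, k+1}`, so `t = k+1` in the paper corresponds to `(t : ℕ) = k`.) -/
theorem stmt_15 {K : Type*} [Field K] (n k : ℕ) (hk : 1 ≤ k) (hkn : k ≤ n - 3)
    (i : Fin (k + 2) → Fin n) (hi : StrictMono i) (t : Fin (k + 1))
    (hgap : (i t.castSucc : ℕ) + 2 ≤ (i t.succ : ℕ))
    (hmin : ∀ t' : Fin (k + 1), t' < t → (i t'.succ : ℕ) = (i t'.castSucc : ℕ) + 1) :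
    ((t : ℕ) < k →
      lqSet K n k (∑ r, Finsupp.single (i r) 1) =
        {l : Fin n | l ≤ i (Fin.last (k + 1)) ∧ l ∉ Set.range i}) ∧
    ((t : ℕ) = k →
      lqSet K n k (∑ r, Finsupp.single (i r) 1) =
        {l : Fin n | l ≤ i (Fin.last (k + 1)) ∧ l ∉ Set.range i} \
          {l : Fin n | (l : ℕ) = (i (⟨k, by omega⟩ : Fin (k + 2)) : ℕ) + 1}) := by
  classical
  have hkm : k < k + 2 := by omega
  set T : Finset (Fin n) := Finset.image i Finset.univ with hT
  have hTmem : ∀ x : Fin n, x ∈ T ↔ ∃ r, i r = x := by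
    intro x; simp [hT]
  have hTcard : T.card = k + 2 := by
    rw [hT, Finset.card_image_of_injective _ hi.injective, Finset.card_univ, Fintype.card_fin]
  have he : (∑ r, Finsupp.single (i r) 1 : Fin n →₀ ℕ) = sqfree T := by
    rw [hT, sqfree, Finset.sum_image (fun a _ b _ h => hi.injective h)]
  have hchain := strictMono_chain hi
  have hconsec : (t : ℕ) = k → ∀ s : ℕ, (hs : s < k + 2) → s ≤ k →
      (i ⟨s, hs⟩ : ℕ) = (i 0 : ℕ) + s := by
    intro htk s
    induction s with
    | zero =>
      intro hs _
      have e0 : (⟨0, hs⟩ : Fin (k+2)) = 0 := Fin.ext (by simp)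
      rw [e0]
      omega
    | succ s ih =>
      intro hs hsk
      have h1 := ih (by omega) (by omega)
      have h2 := hmin ⟨s, by omega⟩ (by rw [Fin.lt_def]; simp; omega)
      have e1 : (⟨s, by omega⟩ : Fin (k+1)).succ = (⟨s+1, hs⟩ : Fin (k+2)) := by
        apply Fin.ext; simp
      have e2 : (⟨s, by omega⟩ : Fin (k+1)).castSucc = (⟨s, by omega⟩ : Fin (k+2)) := by
        apply Fin.ext; simp
      rw [e1, e2] at h2
      rw [h2, h1]
      omega
  have main : ∀ l : Fin n, l ∈ lqSet K n k (sqfree T) ↔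
      (l ≤ i (Fin.last (k+1)) ∧ l ∉ Set.range i ∧
        ((t : ℕ) = k → (l : ℕ) ≠ (i (⟨k, hkm⟩ : Fin (k+2)) : ℕ) + 1)) := by
    intro l
    rw [mem_lqSet_iff]
    constructor
    · rintro ⟨U, hUcard, hUgap, hUlex, hUle⟩
      rw [sqfree_le_iff] at hUle
      have hlT : l ∉ T := by
        intro hlT
        rw [Finset.insert_eq_self.mpr hlT] at hUle
        have hUT : U = T := Finset.eq_of_subset_of_card_le hUle (by omega)
        obtain ⟨p, _, hp⟩ := hUlex
        rw [hUT] at hp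
        exact absurd hp (lt_irrefl _)
      have hlU : l ∈ U := by
        by_contra hlU
        have hsub : U ⊆ T := by
          intro x hx
          rcases Finset.mem_insert.mp (hUle hx) with h | h
          · exact absurd (h ▸ hx) hlU
          · exact h
        have hUT : U = T := Finset.eq_of_subset_of_card_le hsub (by omega)
        obtain ⟨p, _, hp⟩ := hUlex
        rw [hUT] at hp
        exact absurd hp (lt_irrefl _)
      have hcard_ins : (insert l T).card = k + 3 := by
        rw [Finset.card_insert_of_notMem hlT, hTcard]
      have hD : ((insert l T) \ U).card = 1 := by
        rw [Finset.card_sdiff_of_subset hUle]; omega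
      obtain ⟨j, hj⟩ := Finset.card_eq_one.mp hD
      have hjmem : j ∈ insert l T \ U := hj ▸ Finset.mem_singleton_self j
      rw [Finset.mem_sdiff] at hjmem
      have hjl : j ≠ l := fun h => hjmem.2 (h ▸ hlU)
      have hjT : j ∈ T := (Finset.mem_insert.mp hjmem.1).resolve_left hjl
      have hljT : l ∉ T.erase j := fun h => hlT (Finset.mem_of_mem_erase h)
      have hc2 : (insert l (T.erase j)).card = k + 2 := by
        rw [Finset.card_insert_of_notMem hljT, Finset.card_erase_of_mem hjT, hTcard]; omega
      have hUeq : U = insert l (T.erase j) := by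
        apply Finset.eq_of_subset_of_card_le
        · intro x hx
          rcases Finset.mem_insert.mp (hUle hx) with h | h
          · exact Finset.mem_insert.mpr (Or.inl h)
          · exact Finset.mem_insert.mpr
              (Or.inr (Finset.mem_erase.mpr ⟨fun he => hjmem.2 (he ▸ hx), h⟩))
        · omega
      rw [hUeq] at hUlex hUgap
      have hlj : l < j := (lexGT_iff T l j hlT hjT).mp hUlex
      obtain ⟨r, hr⟩ := (hTmem j).mp hjT
      have hjle : j ≤ i (Fin.last (k+1)) := hr ▸ hi.monotone (Fin.le_last r)
      refine ⟨le_of_lt (lt_of_lt_of_le hlj hjle), ?_, ?_⟩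
      · rintro ⟨r', hr'⟩
        exact hlT ((hTmem l).mpr ⟨r', hr'⟩)
      · intro htk hlval
        have hcons := hconsec htk
        -- j must be i last
        have hrlast : r = Fin.last (k+1) := by
          by_contra hrne
          have hrk : (r : ℕ) ≤ k := by
            have h1 := r.isLt
            have h2 : (r : ℕ) ≠ k + 1 := fun hh => hrne (Fin.ext (by simp [hh]))
            omega
          have hmono : (i r : ℕ) ≤ (i ⟨k, hkm⟩ : ℕ) :=
            Fin.le_def.mp (hi.monotone (Fin.le_def.mpr (by simpa using hrk)))
          have hjval : (j : ℕ) = (i r : ℕ) := by rw [hr]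
          have hltv := Fin.lt_def.mp hlj
          omega
        subst hrlast
        -- U is the interval [i 0, i 0 + k + 1]
        have hUchar : ∀ x : Fin n, x ∈ insert l (T.erase j) ↔
            ((i 0 : ℕ) ≤ (x : ℕ) ∧ (x : ℕ) ≤ (i 0 : ℕ) + (k + 1)) := by
          intro x
          have hckm : (i (⟨k, hkm⟩ : Fin (k+2)) : ℕ) = (i 0 : ℕ) + k := hcons k hkm le_rfl
          constructor
          · intro hx
            rcases Finset.mem_insert.mp hx with h | h
            · have h0 : (i 0 : ℕ) + k ≤ (i (⟨k, hkm⟩ : Fin (k+2)) : ℕ) :=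
                hchain k 0 (⟨k, hkm⟩ : Fin (k+2)) (by simp)
              have hxv : (x : ℕ) = (l : ℕ) := by rw [h]
              omega
            · obtain ⟨hxne, hxT⟩ := Finset.mem_erase.mp h
              obtain ⟨r', hr'⟩ := (hTmem x).mp hxT
              have hr'ne : r' ≠ Fin.last (k+1) := fun hee => hxne (by rw [← hr', hee, hr])
              have hr'k : (r' : ℕ) ≤ k := by
                have h1 := r'.isLt
                have h2 : (r' : ℕ) ≠ k + 1 := fun hh => hr'ne (Fin.ext (by simp [hh]))
                omega
              have hcc := hcons (r' : ℕ) (by omega) hr'k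
              rw [show (⟨(r' : ℕ), by omega⟩ : Fin (k+2)) = r' from Fin.ext rfl] at hcc
              have hxv : (x : ℕ) = (i r' : ℕ) := by rw [hr']
              omega
          · rintro ⟨hx1, hx2⟩
            by_cases hs : (x : ℕ) ≤ (i 0 : ℕ) + k
            · have hsk : (x : ℕ) - (i 0 : ℕ) ≤ k := by omega
              have hlt : (x : ℕ) - (i 0 : ℕ) < k + 2 := by omega
              have hval := hcons ((x : ℕ) - (i 0 : ℕ)) hlt hsk
              have hxeq : x = i ⟨(x : ℕ) - (i 0 : ℕ), hlt⟩ := Fin.ext (by omega)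
              apply Finset.mem_insert.mpr
              right
              apply Finset.mem_erase.mpr
              refine ⟨?_, (hTmem x).mpr ⟨_, hxeq.symm⟩⟩
              intro hee
              have hxj : (x : ℕ) = (j : ℕ) := congrArg Fin.val hee
              have hltv := Fin.lt_def.mp hlj
              omega
            · have hxl : (x : ℕ) = (l : ℕ) := by omega
              exact Finset.mem_insert.mpr (Or.inl (Fin.ext hxl))
          -- contradiction with HasGap
        obtain ⟨a, haU, b, hbU, hab, hsucc⟩ := hUgap
        rw [hUchar a] at haU
        rw [hUchar b] at hbU
        have hbn : (b : ℕ) < n := b.isLt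
        have hcn : (a : ℕ) + 1 < n := by omega
        have hcU : (⟨(a : ℕ) + 1, hcn⟩ : Fin n) ∈ insert l (T.erase j) :=
          (hUchar _).mpr (by constructor <;> · show _ ≤ _; simp; omega)
        have hbc := hsucc _ hcU (Fin.lt_def.mpr (by simp))
        rw [Fin.le_def] at hbc
        simp at hbc
        omega
    · rintro ⟨hlast, hnr, hexcl⟩
      have hlT : l ∉ T := fun h => hnr ((hTmem l).mp h)
      have hllast : l < i (Fin.last (k+1)) :=
        lt_of_le_of_ne hlast (fun h => hnr ⟨Fin.last (k+1), h.symm⟩)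
      by_cases hcase : ∃ r : Fin (k+2), l < i r ∧ i r < i (Fin.last (k+1))
      · obtain ⟨r, hlr, hrlast⟩ := hcase
        have hjT : i r ∈ T := (hTmem _).mpr ⟨r, rfl⟩
        have hljT : l ∉ T.erase (i r) := fun h => hlT (Finset.mem_of_mem_erase h)
        have hUcard : (insert l (T.erase (i r))).card = k + 2 := by
          rw [Finset.card_insert_of_notMem hljT, Finset.card_erase_of_mem hjT, hTcard]; omega
        refine ⟨insert l (T.erase (i r)), hUcard, ?_,
          (lexGT_iff T l (i r) hlT hjT).mpr hlr,
          (sqfree_le_iff _ _ _).mpr (Finset.insert_subset_insert l (Finset.erase_subset _ T))⟩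
        have hUne : (insert l (T.erase (i r))).Nonempty := ⟨l, Finset.mem_insert_self _ _⟩
        apply hasGap_of_spread _ hUne
        have hlastU : i (Fin.last (k+1)) ∈ insert l (T.erase (i r)) := by
          apply Finset.mem_insert.mpr
          right
          exact Finset.mem_erase.mpr
            ⟨fun h => absurd (h ▸ hrlast) (lt_irrefl _), (hTmem _).mpr ⟨_, rfl⟩⟩
        have hmaxU : (insert l (T.erase (i r))).max' hUne = i (Fin.last (k+1)) := by
          apply le_antisymm
          · apply Finset.max'_le
            intro x hx
            rcases Finset.mem_insert.mp hx with h | h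
            · rw [h]; exact hlast
            · obtain ⟨r', hr'⟩ := (hTmem x).mp (Finset.mem_of_mem_erase h)
              exact hr' ▸ hi.monotone (Fin.le_last r')
          · exact Finset.le_max' _ _ hlastU
        have hVne : (insert l T).Nonempty := ⟨l, Finset.mem_insert_self _ _⟩
        have hVcard : (insert l T).card = k + 3 := by
          rw [Finset.card_insert_of_notMem hlT, hTcard]
        have hVspread := card_le_spread (insert l T) hVne
        have hmaxV : (insert l T).max' hVne = i (Fin.last (k+1)) := by
          apply le_antisymm
          · apply Finset.max'_le
            intro x hx
            rcases Finset.mem_insert.mp hx with h | h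
            · rw [h]; exact hlast
            · obtain ⟨r', hr'⟩ := (hTmem x).mp h
              exact hr' ▸ hi.monotone (Fin.le_last r')
          · exact Finset.le_max' _ _ (Finset.mem_insert.mpr (Or.inr ((hTmem _).mpr ⟨_, rfl⟩)))
        have hminVU : (insert l T).min' hVne ∈ insert l (T.erase (i r)) := by
          have hmem := Finset.min'_mem (insert l T) hVne
          rcases Finset.mem_insert.mp hmem with h | h
          · exact Finset.mem_insert.mpr (Or.inl h)
          · apply Finset.mem_insert.mpr
            right
            apply Finset.mem_erase.mpr
            refine ⟨?_, h⟩
            intro hee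
            have h1 : (insert l T).min' hVne ≤ l := Finset.min'_le _ _ (Finset.mem_insert_self _ _)
            rw [hee] at h1
            exact absurd (lt_of_lt_of_le hlr h1) (lt_irrefl _)
        have hminle : ((insert l (T.erase (i r))).min' hUne : ℕ) ≤
            ((insert l T).min' hVne : ℕ) :=
          Finset.min'_le _ _ hminVU
        rw [hmaxU, hUcard]
        rw [hmaxV, hVcard] at hVspread
        omega
      · push_neg at hcase
        have hkml : (i (⟨k, hkm⟩ : Fin (k+2)) : ℕ) < (l : ℕ) := by
          have h1 : i (⟨k, hkm⟩ : Fin (k+2)) < i (Fin.last (k+1)) :=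
            hi (by rw [Fin.lt_def]; simp)
          rcases lt_trichotomy (l : ℕ) ((i (⟨k, hkm⟩ : Fin (k+2)) : ℕ)) with h | h | h
          · exact absurd (hcase _ (Fin.lt_def.mpr h)) (not_le.mpr h1)
          · exact absurd (⟨_, Fin.ext h.symm⟩ : ∃ r, i r = l) hnr
          · exact h
        have h0km : (i 0 : ℕ) + k ≤ (i (⟨k, hkm⟩ : Fin (k+2)) : ℕ) :=
          hchain k 0 (⟨k, hkm⟩ : Fin (k+2)) (by simp)
        have hlbound : (i 0 : ℕ) + (k + 2) ≤ (l : ℕ) := by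
          rcases Nat.lt_or_ge (t : ℕ) k with htlt | htge
          · have hc1 : (i 0 : ℕ) + (t : ℕ) ≤ (i t.castSucc : ℕ) :=
              hchain (t : ℕ) 0 t.castSucc (by simp)
            have hc2 : (i t.succ : ℕ) + (k - ((t : ℕ) + 1)) ≤ (i (⟨k, hkm⟩ : Fin (k+2)) : ℕ) :=
              hchain (k - ((t : ℕ) + 1)) t.succ (⟨k, hkm⟩ : Fin (k+2)) (by simp; omega)
            omega
          · have htk : (t : ℕ) = k := by have := t.isLt; omega
            have := hexcl htk
            omega
        have hjT : i (Fin.last (k+1)) ∈ T := (hTmem _).mpr ⟨_, rfl⟩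
        have hljT : l ∉ T.erase (i (Fin.last (k+1))) := fun h => hlT (Finset.mem_of_mem_erase h)
        have hUcard : (insert l (T.erase (i (Fin.last (k+1))))).card = k + 2 := by
          rw [Finset.card_insert_of_notMem hljT, Finset.card_erase_of_mem hjT, hTcard]; omega
        refine ⟨insert l (T.erase (i (Fin.last (k+1)))), hUcard, ?_,
          (lexGT_iff T l _ hlT hjT).mpr hllast,
          (sqfree_le_iff _ _ _).mpr (Finset.insert_subset_insert l (Finset.erase_subset _ T))⟩
        have hUne : (insert l (T.erase (i (Fin.last (k+1))))).Nonempty :=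
          ⟨l, Finset.mem_insert_self _ _⟩
        apply hasGap_of_spread _ hUne
        have h0U : i 0 ∈ insert l (T.erase (i (Fin.last (k+1)))) := by
          apply Finset.mem_insert.mpr
          right
          apply Finset.mem_erase.mpr
          refine ⟨?_, (hTmem _).mpr ⟨0, rfl⟩⟩
          intro hee
          have h01 : (0 : Fin (k+2)) = Fin.last (k+1) := hi.injective hee
          have := congrArg Fin.val h01
          simp at this
        have hminle : ((insert l (T.erase (i (Fin.last (k+1))))).min' hUne : ℕ) ≤ (i 0 : ℕ) :=
          Finset.min'_le _ _ h0U
        have hmaxU : (insert l (T.erase (i (Fin.last (k+1))))).max' hUne = l := by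
          apply le_antisymm
          · apply Finset.max'_le
            intro x hx
            rcases Finset.mem_insert.mp hx with h | h
            · rw [h]
            · obtain ⟨hxne, hxT⟩ := Finset.mem_erase.mp h
              obtain ⟨r', hr'⟩ := (hTmem x).mp hxT
              have hr'ne : r' ≠ Fin.last (k+1) := fun hee => hxne (by rw [← hr', hee])
              have hr'k : (r' : ℕ) ≤ k := by
                have h1 := r'.isLt
                have h2 : (r' : ℕ) ≠ k + 1 := fun hh => hr'ne (Fin.ext (by simp [hh]))
                omega
              have hmono : (i r' : ℕ) ≤ (i (⟨k, hkm⟩ : Fin (k+2)) : ℕ) :=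
                Fin.le_def.mp (hi.monotone (Fin.le_def.mpr (by simpa using hr'k)))
              rw [← hr']
              exact Fin.le_def.mpr (by omega)
          · exact Finset.le_max' _ _ (Finset.mem_insert_self _ _)
        rw [hmaxU, hUcard]
        omega
  constructor
  · intro htk
    ext l
    rw [Set.mem_setOf_eq, he, main l]
    constructor
    · rintro ⟨h1, h2, _⟩
      exact ⟨h1, h2⟩
    · rintro ⟨h1, h2⟩
      exact ⟨h1, h2, fun hc => absurd hc (by omega)⟩
  · intro htk
    ext l
    rw [he, main l]
    simp only [Set.mem_diff, Set.mem_setOf_eq]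
    constructor
    · rintro ⟨h1, h2, h3⟩
      exact ⟨⟨h1, h2⟩, h3 htk⟩
    · rintro ⟨⟨h1, h2⟩, h3⟩
      exact ⟨h1, h2, fun _ => h3⟩
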